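/- If H is a disjoint union of paths with three longest path orders n1 ≥ n2 ≥ n3, and K2 ∨ H contains no t vertex-disjoint copies of P_l, then n1 + n2 + n3 ≤ (t−3)l + 3(l−1). -/
import Mathlib


open SimpleGraph

/-- `G` contains a copy of `F` as a subgraph: an injective graph homomorphism. -/
def ContainsCopy {α β : Type*} (F : SimpleGraph α) (G : SimpleGraph β) : Prop :=
  ∃ f : α → β, Function.Injective f ∧ ∀ a b, F.Adj a b → G.Adj (f a) (f b)

/-- The cone over a graph: a new apex vertex joined to every vertex of `H`.
`cone H = K1 ∨ H`, and `cone (cone H) = K2 ∨ H`. -/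
def cone {β : Type*} (H : SimpleGraph β) : SimpleGraph (Option β) :=
  SimpleGraph.fromRel (fun x y =>
    x = none ∨ ∃ a b, x = some a ∧ y = some b ∧ H.Adj a b)

/-- The disjoint union of paths with orders `n 0, n 1, n 2, …`:
for each `i`, the vertices `(i, 0), …, (i, n i - 1)` form a path. -/
def pathsUnion (n : ℕ → ℕ) : SimpleGraph (ℕ × ℕ) :=
  SimpleGraph.fromRel (fun x y => x.1 = y.1 ∧ x.2 + 1 = y.2 ∧ y.2 < n x.1)

/-- `t` pairwise vertex-disjoint copies of the path `P_l`. -/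
def tPaths (t l : ℕ) : SimpleGraph (Fin t × Fin l) :=
  SimpleGraph.fromRel (fun x y => x.1 = y.1 ∧ (x.2 : ℕ) + 1 = (y.2 : ℕ))

/-- The spider (starlike tree) with `t` branches each having `m` vertices
(besides the common center). -/
def spider (t m : ℕ) : SimpleGraph (Option (Fin t × Fin m)) :=
  SimpleGraph.fromRel (fun x y =>
    (x = none ∧ ∃ p : Fin t × Fin m, y = some p ∧ (p.2 : ℕ) = 0) ∨
    (∃ p q : Fin t × Fin m, x = some p ∧ y = some q ∧ p.1 = q.1 ∧
      (p.2 : ℕ) + 1 = (q.2 : ℕ)))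

/-- `F` is a minor of `G`: branch sets realization. -/
def IsMinor {α β : Type*} (F : SimpleGraph α) (G : SimpleGraph β) : Prop :=
  ∃ B : α → G.Subgraph,
    (∀ a, (B a).verts.Nonempty) ∧
    (∀ a, (B a).Connected) ∧
    (∀ a a', a ≠ a' → Disjoint (B a).verts (B a').verts) ∧
    (∀ a a', F.Adj a a' → ∃ u ∈ (B a).verts, ∃ v ∈ (B a').verts, G.Adj u v)

/-- Planarity, via Wagner's forbidden-minor characterization. -/
def IsPlanar {β : Type*} (G : SimpleGraph β) : Prop :=
  ¬ IsMinor (⊤ : SimpleGraph (Fin 5)) G ∧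
  ¬ IsMinor (completeBipartiteGraph (Fin 3) (Fin 3)) G

/-- Outerplanarity, via the forbidden-minor characterization. -/
def IsOuterplanar {β : Type*} (G : SimpleGraph β) : Prop :=
  ¬ IsMinor (⊤ : SimpleGraph (Fin 4)) G ∧
  ¬ IsMinor (completeBipartiteGraph (Fin 2) (Fin 3)) G

/-- The spectral radius of a finite graph: the largest (adjacency) eigenvalue. -/
noncomputable def specRad {V : Type*} [Fintype V] (G : SimpleGraph V) : ℝ :=
  haveI := Classical.decRel G.Adj
  sSup {μ : ℝ | ∃ x : V → ℝ, x ≠ 0 ∧ (G.adjMatrix ℝ).mulVec x = μ • x}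

lemma cone_adj_none {β : Type*} (H : SimpleGraph β) (x : Option β) (hx : x ≠ none) :
    (cone H).Adj none x := by
  rw [cone, SimpleGraph.fromRel_adj]
  exact ⟨fun h => hx h.symm, Or.inl (Or.inl rfl)⟩

lemma cone_adj_some {β : Type*} (H : SimpleGraph β) {a b : β} (h : H.Adj a b) :
    (cone H).Adj (some a) (some b) := by
  rw [cone, SimpleGraph.fromRel_adj]
  refine ⟨by simpa using h.ne, Or.inl (Or.inr ⟨a, b, rfl, rfl, h⟩)⟩

lemma pu_adj (n : ℕ → ℕ) (i j : ℕ) (h : j + 1 < n i) :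
    (pathsUnion n).Adj (i, j) (i, j + 1) := by
  rw [pathsUnion, SimpleGraph.fromRel_adj]
  exact ⟨by simp, Or.inl ⟨rfl, rfl, h⟩⟩



/-- the long-path vertex enumeration -/
def gmap (n : ℕ → ℕ) (k : ℕ) : Option (Option (ℕ × ℕ)) :=
  if k < n 0 then some (some (0, k))
  else if k = n 0 then none
  else if k < n 0 + 1 + n 1 then some (some (1, k - (n 0 + 1)))
  else if k = n 0 + 1 + n 1 then some none
  else some (some (2, k - (n 0 + n 1 + 2)))

lemma gmap_inj (n : ℕ → ℕ) : Function.Injective (gmap n) := by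
  intro a b hab
  unfold gmap at hab
  split_ifs at hab <;>
    simp at hab <;> omega

lemma gmap_adj (n : ℕ → ℕ) (k : ℕ) (hk : k + 1 < n 0 + n 1 + n 2 + 2) :
    (cone (cone (pathsUnion n))).Adj (gmap n k) (gmap n (k + 1)) := by
  have houter : ∀ x, x ≠ none → (cone (cone (pathsUnion n))).Adj none x :=
    fun x => cone_adj_none _ x
  have hinner : ∀ v : ℕ × ℕ,
      (cone (cone (pathsUnion n))).Adj (some none) (some (some v)) :=
    fun v => cone_adj_some _ (cone_adj_none _ (some v) (by simp))
  have hsome : ∀ u v : ℕ × ℕ, (pathsUnion n).Adj u v →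
      (cone (cone (pathsUnion n))).Adj (some (some u)) (some (some v)) :=
    fun u v h => cone_adj_some _ (cone_adj_some _ h)
  unfold gmap
  rcases lt_trichotomy (k+1) (n 0) with h|h|h
  · rw [if_pos (by omega), if_pos h]
    exact hsome _ _ (pu_adj n 0 k (by omega))
  · rw [if_pos (by omega), if_neg (by omega), if_pos h]
    exact (houter _ (by simp)).symm
  · rcases eq_or_lt_of_le (show n 0 ≤ k by omega) with h0|h0
    · -- k = n 0 : outer apex to next vertex
      rw [if_neg (by omega), if_pos h0.symm]
      apply houter
      split_ifs <;> simp <;> omega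
    · rcases lt_trichotomy (k+1) (n 0 + 1 + n 1) with h1|h1|h1
      · rw [if_neg (by omega), if_neg (by omega), if_pos (by omega),
          if_neg (by omega), if_neg (by omega), if_pos h1]
        have : k + 1 - (n 0 + 1) = (k - (n 0 + 1)) + 1 := by omega
        rw [this]
        exact hsome _ _ (pu_adj n 1 _ (by omega))
      · rw [if_neg (by omega), if_neg (by omega), if_pos (by omega),
          if_neg (by omega), if_neg (by omega), if_neg (by omega), if_pos h1]
        exact (hinner _).symm
      · rcases eq_or_lt_of_le (show n 0 + 1 + n 1 ≤ k by omega) with h2|h2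
        · rw [if_neg (by omega), if_neg (by omega), if_neg (by omega),
            if_pos h2.symm, if_neg (by omega), if_neg (by omega),
            if_neg (by omega), if_neg (by omega)]
          exact hinner _
        · rw [if_neg (by omega), if_neg (by omega), if_neg (by omega),
            if_neg (by omega), if_neg (by omega), if_neg (by omega),
            if_neg (by omega), if_neg (by omega)]
          have : k + 1 - (n 0 + n 1 + 2) = (k - (n 0 + n 1 + 2)) + 1 := by omega
          rw [this]
          exact hsome _ _ (pu_adj n 2 _ (by omega))


theorem K2_join_linearForest_tPl_free (t l : ℕ) (ht : 3 ≤ t) (hl : 3 ≤ l)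
    (n : ℕ → ℕ) (hmono : Antitone n)
    (hfree : ¬ ContainsCopy (tPaths t l) (cone (cone (pathsUnion n)))) :
    n 0 + n 1 + n 2 ≤ (t - 3) * l + 3 * (l - 1) := by
  by_contra hlt
  push_neg at hlt
  apply hfree
  have h1 : (t - 3) * l + 3 * l = t * l := by
    have h := Nat.sub_add_cancel ht
    calc (t-3)*l + 3*l = ((t-3)+3)*l := by ring
      _ = t*l := by rw [h]
  have htl : t * l ≤ n 0 + n 1 + n 2 + 2 := by omega
  have hl0 : 0 < l := by omega
  refine ⟨fun p => gmap n ((p.1 : ℕ) * l + (p.2 : ℕ)), ?_, ?_⟩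
  · intro p q hpq
    have h := gmap_inj n hpq
    have hp2 := p.2.isLt
    have hq2 := q.2.isLt
    have e1 : ((p.1:ℕ)*l + (p.2:ℕ)) % l = (p.2:ℕ) := by
      rw [mul_comm, Nat.mul_add_mod, Nat.mod_eq_of_lt hp2]
    have e1' : ((q.1:ℕ)*l + (q.2:ℕ)) % l = (q.2:ℕ) := by
      rw [mul_comm, Nat.mul_add_mod, Nat.mod_eq_of_lt hq2]
    have e2 : ((p.1:ℕ)*l + (p.2:ℕ)) / l = (p.1:ℕ) := by
      rw [mul_comm, Nat.mul_add_div hl0, Nat.div_eq_of_lt hp2, add_zero]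
    have e2' : ((q.1:ℕ)*l + (q.2:ℕ)) / l = (q.1:ℕ) := by
      rw [mul_comm, Nat.mul_add_div hl0, Nat.div_eq_of_lt hq2, add_zero]
    have f1 : (p.1:ℕ) = (q.1:ℕ) := by rw [← e2, ← e2', h]
    have f2 : (p.2:ℕ) = (q.2:ℕ) := by rw [← e1, ← e1', h]
    exact Prod.ext (Fin.ext f1) (Fin.ext f2)
  · intro p q hpq
    rw [tPaths, SimpleGraph.fromRel_adj] at hpq
    obtain ⟨hne, ⟨e1, e2⟩ | ⟨e1, e2⟩⟩ := hpq
    · have e1' : (p.1:ℕ)*l = (q.1:ℕ)*l := by rw [e1]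
      have key : ((q.1:ℕ)*l + (q.2:ℕ)) = ((p.1:ℕ)*l + (p.2:ℕ)) + 1 := by omega
      have hb : ((q.1:ℕ)+1)*l ≤ t*l := Nat.mul_le_mul_right l q.1.isLt
      have hb2 : ((q.1:ℕ)+1)*l = (q.1:ℕ)*l + l := by ring
      have hq2 := q.2.isLt
      show (cone (cone (pathsUnion n))).Adj (gmap n ((p.1:ℕ)*l+(p.2:ℕ))) (gmap n ((q.1:ℕ)*l+(q.2:ℕ)))
      rw [key]
      exact gmap_adj n _ (by omega)
    · have e1' : (q.1:ℕ)*l = (p.1:ℕ)*l := by rw [e1]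
      have key : ((p.1:ℕ)*l + (p.2:ℕ)) = ((q.1:ℕ)*l + (q.2:ℕ)) + 1 := by omega
      have hb : ((p.1:ℕ)+1)*l ≤ t*l := Nat.mul_le_mul_right l p.1.isLt
      have hb2 : ((p.1:ℕ)+1)*l = (p.1:ℕ)*l + l := by ring
      have hp2 := p.2.isLt
      show (cone (cone (pathsUnion n))).Adj (gmap n ((p.1:ℕ)*l+(p.2:ℕ))) (gmap n ((q.1:ℕ)*l+(q.2:ℕ)))
      rw [key]
      exact (gmap_adj n _ (by omega)).symm
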